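/- In a simple C4-free graph G, if every edge incident to a vertex x lies in a triangle, then the degree of x is even. -/

import Mathlib

open Finset

variable {V : Type*}

/-- Unweighted non-normalized graph Laplacian. -/
noncomputable def nnLap (G : SimpleGraph V) [G.LocallyFinite] (f : V → ℝ) (x : V) : ℝ :=
  ∑ y ∈ G.neighborFinset x, (f y - f x)

/-- Unweighted normalized graph Laplacian. -/
noncomputable def nLap (G : SimpleGraph V) [G.LocallyFinite] (f : V → ℝ) (x : V) : ℝ :=
  (∑ y ∈ G.neighborFinset x, (f y - f x)) / (G.degree x : ℝ)

/-- Bakry–Émery carré du champ operator Γ for a Laplacian `L`. -/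
noncomputable def gam (L : (V → ℝ) → V → ℝ) (f g : V → ℝ) (x : V) : ℝ :=
  (L (f * g) x - f x * L g x - g x * L f x) / 2

/-- Iterated carré du champ operator Γ₂ for a Laplacian `L`. -/
noncomputable def gam2 (L : (V → ℝ) → V → ℝ) (f g : V → ℝ) (x : V) : ℝ :=
  (L (gam L f g) x - gam L f (L g) x - gam L (L f) g x) / 2

/-- `G` has no 4-cycle subgraph, equivalently any two distinct vertices have at
most one common neighbor. -/
def C4Free (G : SimpleGraph V) : Prop :=
  ∀ ⦃u v a b : V⦄, u ≠ v → G.Adj u a → G.Adj a v → G.Adj u b → G.Adj b v → a = b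

/-- In a `C₄`-free graph, if every edge incident to `x` lies in a triangle,
then `deg x` is even. -/
theorem stmt_4 (G : SimpleGraph V) [G.LocallyFinite] (hC4 : C4Free G) (x : V)
    (ht : ∀ y, G.Adj x y → ∃ z, G.Adj x z ∧ G.Adj y z) :
    Even (G.degree x) := by
  classical
  set s := G.neighborFinset x with hs
  have hmem : ∀ y, y ∈ s → G.Adj x y := fun y hy => by
    rwa [hs, SimpleGraph.mem_neighborFinset] at hy
  -- the pairing function
  let g : ∀ y ∈ s, V := fun y hy => Classical.choose (ht y (hmem y hy))
  have hgadj : ∀ y (hy : y ∈ s), G.Adj x (g y hy) ∧ G.Adj y (g y hy) :=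
    fun y hy => Classical.choose_spec (ht y (hmem y hy))
  have g_mem : ∀ y (hy : y ∈ s), g y hy ∈ s := fun y hy => by
    rw [hs, SimpleGraph.mem_neighborFinset]; exact (hgadj y hy).1
  -- uniqueness of common neighbor gives involutivity
  have hinv : ∀ y (hy : y ∈ s), g (g y hy) (g_mem y hy) = y := by
    intro y hy
    have h1 := hgadj y hy
    have h2 := hgadj (g y hy) (g_mem y hy)
    -- x and (g y hy) are distinct (they are adjacent); common neighbors: y and g (g y hy)
    have hxne : x ≠ g y hy := G.ne_of_adj h1.1
    exact hC4 hxne h2.1.symm.symm h2.2.symm (hmem y hy) h1.2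
  have hne : ∀ y (hy : y ∈ s), g y hy ≠ y := fun y hy h => by
    have := (hgadj y hy).2
    rw [h] at this
    exact G.loopless.irrefl y this
  -- sum of ones in ZMod 2 vanishes
  have hsum : (∑ _y ∈ s, (1 : ZMod 2)) = 0 := by
    refine Finset.sum_involution g (fun a ha => ?_) (fun a ha _ => hne a ha) g_mem hinv
    decide
  rw [Finset.sum_const, nsmul_eq_mul, mul_one] at hsum
  have : (2 : ℕ) ∣ s.card := (ZMod.natCast_eq_zero_iff _ _).mp hsum
  rw [SimpleGraph.degree, ← hs]
  obtain ⟨k, hk⟩ := this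
  exact ⟨k, by omega⟩
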